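/- arXiv:1212.6696 — 2 statements merged into one kernel-verified Lean document; each statement's English description precedes it below -/
import Mathlib

section
/- Let f₁, f₂ ∈ ℝ[x₁,…,xₙ] be homogeneous polynomials such that (f₁)^k·f₂ is hyperbolic with respect to e ∈ ℝⁿ for some natural number k ≥ 1, and let h ∈ ℝ[x₁,…,xₙ] be homogeneous of degree deg((f₁)^k f₂) − 1. If h interlaces (f₁)^k·f₂ with respect to e, then (f₁)^{k−1} divides h. -/
open Filter Topology

/-- The restriction of a multivariate polynomial to the line `t ↦ t•e + a`,
as a univariate polynomial in `t`. -/
noncomputable def lineRestrict {n : ℕ} (f : MvPolynomial (Fin n) ℝ) (e a : Fin n → ℝ) :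
    Polynomial ℝ :=
  MvPolynomial.aeval (fun i => Polynomial.C (a i) + Polynomial.C (e i) * Polynomial.X) f

/-- A univariate real polynomial has only real zeros: every complex root is real. -/
def RealRooted (p : Polynomial ℝ) : Prop :=
  ∀ z : ℂ, Polynomial.aeval z p = 0 → z.im = 0

/-- `f` is hyperbolic with respect to `e`: `f(e) ≠ 0` and for every `a`,
all roots of `t ↦ f(t•e + a)` are real. -/
def IsHyperbolic {n : ℕ} (f : MvPolynomial (Fin n) ℝ) (e : Fin n → ℝ) : Prop :=
  MvPolynomial.eval e f ≠ 0 ∧ ∀ a : Fin n → ℝ, RealRooted (lineRestrict f e a)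

/-- The roots of a univariate real polynomial, sorted increasingly (with multiplicity). -/
noncomputable def sortedRoots (p : Polynomial ℝ) : List ℝ :=
  p.roots.sort (· ≤ ·)

/-- `q` interlaces `p` (univariate): both have only real roots, `deg q = deg p − 1`,
and with roots `α₁ ≤ … ≤ α_d` of `p`, `β₁ ≤ … ≤ β_{d-1}` of `q`,
one has `α_i ≤ β_i ≤ α_{i+1}`. -/
def InterlacesU (q p : Polynomial ℝ) : Prop :=
  RealRooted p ∧ RealRooted q ∧ q.natDegree + 1 = p.natDegree ∧
    ∀ i : ℕ, i + 1 < (sortedRoots p).length →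
      (sortedRoots p).getD i 0 ≤ (sortedRoots q).getD i 0 ∧
        (sortedRoots q).getD i 0 ≤ (sortedRoots p).getD (i + 1) 0

/-- `q` strictly interlaces `p` (univariate): all interlacing inequalities are strict. -/
def StrictInterlacesU (q p : Polynomial ℝ) : Prop :=
  RealRooted p ∧ RealRooted q ∧ q.natDegree + 1 = p.natDegree ∧
    ∀ i : ℕ, i + 1 < (sortedRoots p).length →
      (sortedRoots p).getD i 0 < (sortedRoots q).getD i 0 ∧
        (sortedRoots q).getD i 0 < (sortedRoots p).getD (i + 1) 0

/-- `g` interlaces `f` with respect to `e`: `g(t•e+a)` interlaces `f(t•e+a)` for every `a`. -/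
def Interlaces {n : ℕ} (g f : MvPolynomial (Fin n) ℝ) (e : Fin n → ℝ) : Prop :=
  ∀ a : Fin n → ℝ, InterlacesU (lineRestrict g e a) (lineRestrict f e a)

/-- `g` strictly interlaces `f` with respect to `e`: `g(t•e+a)` strictly interlaces
`f(t•e+a)` for all `a` in a nonempty Zariski-open subset of `ℝⁿ`. -/
def StrictInterlaces {n : ℕ} (g f : MvPolynomial (Fin n) ℝ) (e : Fin n → ℝ) : Prop :=
  ∃ p : MvPolynomial (Fin n) ℝ, p ≠ 0 ∧ ∀ a : Fin n → ℝ, MvPolynomial.eval a p ≠ 0 →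
    StrictInterlacesU (lineRestrict g e a) (lineRestrict f e a)

/-- The hyperbolicity cone `C(f,e)`: the connected component of `e` in `ℝⁿ \ V_ℝ(f)`. -/
def hypCone {n : ℕ} (f : MvPolynomial (Fin n) ℝ) (e : Fin n → ℝ) : Set (Fin n → ℝ) :=
  connectedComponentIn {x | MvPolynomial.eval x f ≠ 0} e

/-- The directional derivative `D_e f = Σᵢ eᵢ ∂f/∂xᵢ`. -/
noncomputable def Dd {n : ℕ} (e : Fin n → ℝ) (f : MvPolynomial (Fin n) ℝ) :
    MvPolynomial (Fin n) ℝ :=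
  ∑ i, MvPolynomial.C (e i) * MvPolynomial.pderiv i f

/-- `Int(f,e)`: homogeneous polynomials of degree `d−1` interlacing `f` (of degree `d`)
with respect to `e` and positive at `e`. -/
def IntCone {n : ℕ} (f : MvPolynomial (Fin n) ℝ) (e : Fin n → ℝ) (d : ℕ) :
    Set (MvPolynomial (Fin n) ℝ) :=
  {g | g.IsHomogeneous (d - 1) ∧ Interlaces g f e ∧ 0 < MvPolynomial.eval e g}

/-- The Wronskian polynomial `Δ_{e,a} f = D_e f · D_a f − f · D_e D_a f`. -/
noncomputable def Wron {n : ℕ} (e a : Fin n → ℝ) (f : MvPolynomial (Fin n) ℝ) :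
    MvPolynomial (Fin n) ℝ :=
  Dd e f * Dd a f - f * Dd e (Dd a f)

/-- A polynomial is a sum of squares of polynomials. -/
def IsSOS {n : ℕ} (p : MvPolynomial (Fin n) ℝ) : Prop :=
  ∃ (k : ℕ) (g : Fin k → MvPolynomial (Fin n) ℝ), p = ∑ i, (g i) ^ 2

/-- The matrix pencil `M(x) = x₁M₁ + … + xₙMₙ` as a matrix of polynomials. -/
noncomputable def pencil {n d : ℕ} (M : Fin n → Matrix (Fin d) (Fin d) ℝ) :
    Matrix (Fin d) (Fin d) (MvPolynomial (Fin n) ℝ) :=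
  Matrix.of fun i j => ∑ k, MvPolynomial.C (M k i j) * MvPolynomial.X k

/-- `Δ_{ij} f = (∂f/∂xᵢ)(∂f/∂xⱼ) − f·(∂²f/∂xᵢ∂xⱼ)`. -/
noncomputable def Dij {n : ℕ} (i j : Fin n) (f : MvPolynomial (Fin n) ℝ) :
    MvPolynomial (Fin n) ℝ :=
  MvPolynomial.pderiv i f * MvPolynomial.pderiv j f -
    f * MvPolynomial.pderiv i (MvPolynomial.pderiv j f)

/-- `f` is stable: `f(μ) ≠ 0` whenever every coordinate of `μ` has positive imaginary part. -/
def IsStable {n : ℕ} (f : MvPolynomial (Fin n) ℝ) : Prop :=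
  ∀ μ : Fin n → ℂ, (∀ i, 0 < (μ i).im) → MvPolynomial.aeval μ f ≠ 0


open Polynomial in
theorem coeff_prod_varying {R : Type*} [CommSemiring R] {ι : Type*} (s : Finset ι)
    (p : ι → R[X]) (m : ι → ℕ) (h : ∀ i ∈ s, (p i).natDegree ≤ m i) :
    (∏ i ∈ s, p i).coeff (∑ i ∈ s, m i) = ∏ i ∈ s, (p i).coeff (m i) := by
  classical
  induction s using Finset.induction_on with
  | empty => simp
  | @insert a s ha ih =>
    rw [Finset.prod_insert ha, Finset.prod_insert ha, Finset.sum_insert ha,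
      Polynomial.coeff_mul_add_eq_of_natDegree_le (h a (Finset.mem_insert_self a s))
        (Polynomial.natDegree_prod_le _ _ |>.trans (Finset.sum_le_sum fun i hi => h i (Finset.mem_insert_of_mem hi))),
      ih fun i hi => h i (Finset.mem_insert_of_mem hi)]

open Polynomial in
theorem natDegree_line_le {R S : Type*} [CommSemiring R] [CommSemiring S] [Algebra R S] {n : ℕ}
    (f : MvPolynomial (Fin n) R) {d : ℕ} (hf : f.IsHomogeneous d) (v u : Fin n → S) :
    (MvPolynomial.aeval (fun i => Polynomial.C (v i) + Polynomial.C (u i) * Polynomial.X) f).natDegree ≤ d := by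
  classical
  conv_lhs => rw [← MvPolynomial.support_sum_monomial_coeff f]
  rw [map_sum]
  refine (Polynomial.natDegree_sum_le _ _).trans ?_
  rw [Finset.fold_max_le]
  refine ⟨Nat.zero_le d, fun m hm => ?_⟩
  have hdeg : (∑ i ∈ m.support, m i) = d := by
    by_contra hne
    exact MvPolynomial.mem_support_iff.mp hm (hf.coeff_eq_zero (by simpa [Finsupp.degree_apply] using hne))
  rw [Function.comp_apply, MvPolynomial.aeval_monomial]
  refine (natDegree_mul_le).trans ?_
  have h1 : (algebraMap R S[X] (MvPolynomial.coeff m f)).natDegree = 0 := by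
    rw [Polynomial.algebraMap_apply]; exact natDegree_C _
  rw [h1, zero_add]
  refine (natDegree_prod_le _ _).trans ?_
  rw [← hdeg]
  refine Finset.sum_le_sum fun i _ => ?_
  refine (natDegree_pow_le).trans ?_
  have : (Polynomial.C (v i) + Polynomial.C (u i) * Polynomial.X).natDegree ≤ 1 := by
    compute_degree
  calc m i * (Polynomial.C (v i) + Polynomial.C (u i) * Polynomial.X).natDegree
      ≤ m i * 1 := Nat.mul_le_mul_left _ this
    _ = m i := mul_one _

open Polynomial in
theorem coeff_line_top {R S : Type*} [CommRing R] [CommRing S] [Algebra R S] {n : ℕ}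
    (f : MvPolynomial (Fin n) R) {d : ℕ} (hf : f.IsHomogeneous d) (v u : Fin n → S) :
    (MvPolynomial.aeval (fun i => Polynomial.C (v i) + Polynomial.C (u i) * Polynomial.X) f).coeff d
      = MvPolynomial.aeval u f := by
  classical
  conv_lhs => rw [← MvPolynomial.support_sum_monomial_coeff f]
  conv_rhs => rw [← MvPolynomial.support_sum_monomial_coeff f]
  rw [map_sum, map_sum, Polynomial.finset_sum_coeff]
  refine Finset.sum_congr rfl fun m hm => ?_
  have hdeg : (∑ i ∈ m.support, m i) = d := by
    by_contra hne
    exact MvPolynomial.mem_support_iff.mp hm (hf.coeff_eq_zero (by simpa [Finsupp.degree_apply] using hne))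
  rw [MvPolynomial.aeval_monomial, MvPolynomial.aeval_monomial, Polynomial.algebraMap_apply,
    Polynomial.coeff_C_mul]
  congr 1
  have hprod : (m.prod fun i k => (Polynomial.C (v i) + Polynomial.C (u i) * Polynomial.X) ^ k)
      = ∏ i ∈ m.support, (Polynomial.C (v i) + Polynomial.C (u i) * Polynomial.X) ^ (m i) := rfl
  have hprodu : (m.prod fun i k => u i ^ k) = ∏ i ∈ m.support, u i ^ (m i) := rfl
  rw [hprod, hprodu, ← hdeg, coeff_prod_varying _ _ (fun i => m i) ?_]
  · refine Finset.prod_congr rfl fun i _ => ?_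
    have hb : (Polynomial.C (v i) + Polynomial.C (u i) * Polynomial.X).natDegree ≤ 1 := by
      compute_degree
    have := Polynomial.coeff_pow_of_natDegree_le (n := 1) (m := m i) hb
    rw [mul_one] at this
    rw [this]
    simp [Polynomial.coeff_add]
  · intro i _
    refine (natDegree_pow_le).trans ?_
    have hb : (Polynomial.C (v i) + Polynomial.C (u i) * Polynomial.X).natDegree ≤ 1 := by
      compute_degree
    calc m i * _ ≤ m i * 1 := Nat.mul_le_mul_left _ hb
      _ = m i := mul_one _


/-- In a sorted list, the occurrences of `α` form a contiguous run, preceded by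
smaller elements. -/
theorem sorted_run {l : List ℝ} (hs : l.Pairwise (· ≤ ·)) (α : ℝ) :
    ∃ i, i + l.count α ≤ l.length ∧ (∀ j < i, l.getD j 0 < α) ∧
      (∀ j, i ≤ j → j < i + l.count α → l.getD j 0 = α) := by
  induction l with
  | nil => exact ⟨0, by simp, by simp, by simp⟩
  | cons x l ih =>
    have hxl : ∀ b ∈ l, x ≤ b := fun _ hb => List.rel_of_pairwise_cons hs hb
    obtain ⟨i, h1, h2, h3⟩ := ih (List.pairwise_cons.mp hs).2
    rcases lt_trichotomy x α with hx | hx | hx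
    · -- x < α : shift run by one
      refine ⟨i + 1, ?_, ?_, ?_⟩
      · have : (x :: l).count α = l.count α := by
          simp [List.count_cons, hx.ne]
        simp only [this, List.length_cons]; omega
      · intro j hj
        cases j with
        | zero => simpa using hx
        | succ j =>
          rw [List.getD_cons_succ]
          exact h2 j (by omega)
      · intro j hij hj
        have hc : (x :: l).count α = l.count α := by
          simp [List.count_cons, hx.ne]
        cases j with
        | zero => omega
        | succ j =>
          rw [List.getD_cons_succ]
          exact h3 j (by omega) (by omega)
    · -- x = α : run starts at 0
      subst hx
      have hcount : (x :: l).count x = l.count x + 1 := by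
        rw [List.count_cons]; simp
      have hi0 : l.count x ≠ 0 → i = 0 := by
        intro hc0
        by_contra hi
        have hlen : 0 < l.length := by omega
        have := h2 0 (by omega)
        have hmem : l.getD 0 0 ∈ l := by
          rw [List.getD_eq_getElem _ _ hlen]; exact List.getElem_mem _
        exact absurd (hxl _ hmem) (not_le.mpr this)
      refine ⟨0, ?_, by omega, ?_⟩
      · rw [hcount]
        rcases Nat.eq_zero_or_pos (l.count x) with hc | hc
        · simp [hc]
        · have := hi0 (by omega); subst this; simpa using h1
      · intro j _ hj
        rw [hcount] at hj
        cases j with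
        | zero => simp
        | succ j =>
          have h0 := hi0 (by omega)
          rw [List.getD_cons_succ]
          exact h3 j (by omega) (by omega)
    · -- x > α : α doesn't occur
      have hcl : l.count α = 0 := by
        rw [List.count_eq_zero]
        intro hmem
        exact absurd (hxl _ hmem) (not_le.mpr hx)
      have hc : (x :: l).count α = 0 := by
        simp [List.count_cons, hcl, hx.ne']
      exact ⟨0, by simp [hc], by omega, by omega⟩

/-- If a list has a run of `m` entries equal to `α`, then `count α ≥ m`. -/
theorem le_count_of_run {l : List ℝ} {α : ℝ} {i m : ℕ}
    (hlen : i + m ≤ l.length) (h : ∀ j, i ≤ j → j < i + m → l.getD j 0 = α) :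
    m ≤ l.count α := by
  have hsub : ((l.drop i).take m).Sublist l := ((l.drop i).take_sublist m).trans (l.drop_sublist i)
  have hrep : (l.drop i).take m = List.replicate m α := by
    refine List.eq_replicate_iff.mpr ⟨?_, ?_⟩
    · rw [List.length_take, List.length_drop]; omega
    · intro b hb
      obtain ⟨j, hj, rfl⟩ := List.mem_iff_getElem.mp hb
      rw [List.getElem_take, List.getElem_drop]
      have hlt : i + j < l.length := by
        have := hj; rw [List.length_take, List.length_drop] at this; omega
      rw [← List.getD_eq_getElem _ 0 hlt]
      exact h (i + j) (by omega) (by rw [List.length_take, List.length_drop] at hj; omega)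
  have := hsub.count_le α
  rw [hrep] at this
  simpa using this

theorem realRooted_splits {p : Polynomial ℝ} (hp : p ≠ 0) (hR : RealRooted p) :
    p.Splits := by
  classical
  set f : ℝ →+* ℂ := algebraMap ℝ ℂ
  have hfi : Function.Injective f := f.injective
  set P := p.map f with hP
  have hP0 : P ≠ 0 := (Polynomial.map_ne_zero_iff hfi).mpr hp
  have hPsplits : P.Splits := IsAlgClosed.splits P
  have hcard : P.roots.card = p.natDegree := by
    rw [Polynomial.splits_iff_card_roots.mp hPsplits, Polynomial.natDegree_map_eq_of_injective hfi]
  have hle : P.roots ≤ p.roots.map f := by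
    rw [Multiset.le_iff_count]
    intro z
    by_cases hz : z ∈ P.roots
    · have hroot : Polynomial.aeval z p = 0 := by
        have := Polynomial.isRoot_of_mem_roots hz
        rwa [Polynomial.IsRoot, Polynomial.eval_map, ← Polynomial.aeval_def] at this
      have him : z.im = 0 := hR z hroot
      have hz' : z = f z.re := by
        apply Complex.ext <;> simp [him, f]
      rw [hz', Multiset.count_map_eq_count' f _ hfi, Polynomial.count_roots,
        Polynomial.count_roots, ← Polynomial.eq_rootMultiplicity_map hfi]
    · rw [Multiset.count_eq_zero_of_notMem hz]; exact Nat.zero_le _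
  have hcard2 : p.natDegree ≤ p.roots.card := by
    calc p.natDegree = P.roots.card := hcard.symm
      _ ≤ (p.roots.map f).card := Multiset.card_le_card hle
      _ = p.roots.card := Multiset.card_map _ _
  exact Polynomial.splits_iff_card_roots.mpr (le_antisymm (Polynomial.card_roots' p) hcard2)

theorem count_roots_interlaces {p q : Polynomial ℝ} (hI : InterlacesU q p)
    (hp : p ≠ 0) (hq : q ≠ 0) (α : ℝ) :
    p.roots.count α ≤ q.roots.count α + 1 := by
  classical
  obtain ⟨hRp, hRq, hdeg, hil⟩ := hI
  have hsp := realRooted_splits hp hRp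
  have hsq := realRooted_splits hq hRq
  have hlp : (sortedRoots p).length = p.natDegree := by
    rw [sortedRoots, Multiset.length_sort, Polynomial.splits_iff_card_roots.mp hsp]
  have hlq : (sortedRoots q).length = q.natDegree := by
    rw [sortedRoots, Multiset.length_sort, Polynomial.splits_iff_card_roots.mp hsq]
  have hcp : (sortedRoots p).count α = p.roots.count α := by
    rw [← Multiset.coe_count, sortedRoots, Multiset.sort_eq]
  have hcq : (sortedRoots q).count α = q.roots.count α := by
    rw [← Multiset.coe_count, sortedRoots, Multiset.sort_eq]
  set m := p.roots.count α with hm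
  by_cases hm1 : m ≤ 1
  · omega
  · obtain ⟨i, h1, _, h3⟩ := sorted_run (l := sortedRoots p) (Multiset.pairwise_sort _ _) α
    rw [hcp] at h1 h3
    have key : m - 1 ≤ (sortedRoots q).count α := by
      apply le_count_of_run (i := i)
      · omega
      · intro j hij hj
        have hconds : j + 1 < (sortedRoots p).length := by omega
        obtain ⟨hl, hr⟩ := hil j hconds
        have e1 : (sortedRoots p).getD j 0 = α := h3 j hij (by omega)
        have e2 : (sortedRoots p).getD (j+1) 0 = α := h3 (j+1) (by omega) (by omega)
        rw [e1] at hl; rw [e2] at hr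
        exact le_antisymm hr hl
    rw [hcq] at key
    omega

open Polynomial in
theorem pow_dvd_of_counts {u w : Polynomial ℝ} (hu : u ≠ 0)
    (hsu : u.Splits) (r : ℕ)
    (hc : ∀ α : ℝ, r * u.roots.count α ≤ w.roots.count α) : u ^ r ∣ w := by
  classical
  have hle : r • u.roots ≤ w.roots := by
    rw [Multiset.le_iff_count]
    intro α
    rw [Multiset.count_nsmul]
    exact hc α
  have hdvd : ((r • u.roots).map fun a => X - C a).prod ∣ w :=
    (Multiset.prod_dvd_prod_of_le (Multiset.map_le_map hle)).trans w.prod_multiset_X_sub_C_dvd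
  have hu_eq : u = C u.leadingCoeff * (u.roots.map fun a => X - C a).prod :=
    hsu.eq_prod_roots
  have hpow : u ^ r = C (u.leadingCoeff ^ r) * ((r • u.roots).map fun a => X - C a).prod := by
    rw [Multiset.map_nsmul, Multiset.prod_nsmul, map_pow, ← mul_pow, ← hu_eq]
  rw [hpow]
  have hunit : IsUnit (C (u.leadingCoeff ^ r)) :=
    Polynomial.isUnit_C.mpr ((pow_ne_zero r (leadingCoeff_ne_zero.mpr hu)).isUnit)
  rw [mul_comm]
  exact (IsUnit.mul_right_dvd hunit).mpr hdvd


section MainAux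

open Polynomial

variable {n : ℕ}

/-- `aeval` into the base ring is `eval`. -/
theorem aeval_eq_eval' (u : Fin n → ℝ) (f : MvPolynomial (Fin n) ℝ) :
    MvPolynomial.aeval u f = MvPolynomial.eval u f := by
  rw [MvPolynomial.aeval_eq_eval₂Hom, Algebra.algebraMap_self]; rfl

/-- `aeval` at constants is `C` of an `eval`. -/
theorem aeval_C_comp (e : Fin n → ℝ) (f : MvPolynomial (Fin n) ℝ) :
    MvPolynomial.aeval (fun i => MvPolynomial.C (e i) : Fin n → MvPolynomial (Fin n) ℝ) f
      = MvPolynomial.C (MvPolynomial.eval e f) := by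
  induction f using MvPolynomial.induction_on with
  | C r => simp [MvPolynomial.algebraMap_eq]
  | add p q hp hq => simp only [map_add, hp, hq]
  | mul_X p i hp =>
      rw [map_mul, MvPolynomial.aeval_X, hp, map_mul, MvPolynomial.eval_X, ← map_mul]

/-- The substitution `xᵢ ↦ xᵢ + t eᵢ` into `ℝ[x][t]`. -/
noncomputable def lineLift (e : Fin n → ℝ) (f : MvPolynomial (Fin n) ℝ) :
    Polynomial (MvPolynomial (Fin n) ℝ) :=
  MvPolynomial.aeval
    (fun i => Polynomial.C (MvPolynomial.X i) +
      Polynomial.C (MvPolynomial.C (e i)) * Polynomial.X) f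

theorem map_lineLift (e a : Fin n → ℝ) (f : MvPolynomial (Fin n) ℝ) :
    (lineLift e f).map (MvPolynomial.eval a) = lineRestrict f e a := by
  induction f using MvPolynomial.induction_on with
  | C r =>
      simp [lineLift, lineRestrict, MvPolynomial.algebraMap_eq, Polynomial.algebraMap_apply]
  | add p q hp hq => simp [lineLift, lineRestrict, map_add, Polynomial.map_add] at *
                     simp [hp, hq]
  | mul_X p i hp =>
      simp only [lineLift, lineRestrict, map_mul, MvPolynomial.aeval_X, Polynomial.map_mul,
        Polynomial.map_add, Polynomial.map_C, MvPolynomial.eval_X, MvPolynomial.eval_C,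
        Polynomial.map_X] at *
      rw [hp]

theorem eval_zero_lineLift (e : Fin n → ℝ) (f : MvPolynomial (Fin n) ℝ) :
    Polynomial.eval 0 (lineLift e f) = f := by
  induction f using MvPolynomial.induction_on with
  | C r =>
      simp [lineLift, MvPolynomial.algebraMap_eq, Polynomial.algebraMap_apply]
  | add p q hp hq => simp [lineLift, map_add] at *; simp [hp, hq]
  | mul_X p i hp =>
      simp only [lineLift, map_mul, MvPolynomial.aeval_X, Polynomial.eval_mul,
        Polynomial.eval_add, Polynomial.eval_C, Polynomial.eval_X, mul_zero, add_zero] at *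
      rw [hp]

/-- The key univariate statement: on each line, `(f₁)ₐ^(k-1)` divides `hₐ`. -/
theorem line_pow_dvd {d₁ d₂ k : ℕ} (f₁ f₂ h : MvPolynomial (Fin n) ℝ)
    (e : Fin n → ℝ) (hf₁ : f₁.IsHomogeneous d₁) (hf₂ : f₂.IsHomogeneous d₂)
    (hk : 1 ≤ k) (hyp : IsHyperbolic (f₁ ^ k * f₂) e)
    (hint : Interlaces h (f₁ ^ k * f₂) e) (a : Fin n → ℝ) :
    (lineRestrict f₁ e a) ^ (k - 1) ∣ lineRestrict h e a := by
  classical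
  by_cases hha : lineRestrict h e a = 0
  · rw [hha]; exact dvd_zero _
  set va := lineRestrict f₁ e a with hva_def
  set wa := lineRestrict f₂ e a with hwa_def
  set pa := lineRestrict (f₁ ^ k * f₂) e a with hpa_def
  have hpa_eq : pa = va ^ k * wa := by
    simp [hpa_def, hva_def, hwa_def, lineRestrict, map_mul, map_pow]
  have hF : (f₁ ^ k * f₂).IsHomogeneous (k * d₁ + d₂) := by
    have := (hf₁.pow k).mul hf₂
    simpa [mul_comm] using this
  have hevalF : MvPolynomial.eval e (f₁ ^ k * f₂) ≠ 0 := hyp.1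
  have hpatop : pa.coeff (k * d₁ + d₂) = MvPolynomial.eval e (f₁ ^ k * f₂) := by
    rw [hpa_def, lineRestrict, coeff_line_top _ hF a e, aeval_eq_eval']
  have hpa0 : pa ≠ 0 := fun h0 => hevalF (by rw [← hpatop, h0, Polynomial.coeff_zero])
  have hva0 : va ≠ 0 := by
    intro h0; rw [hpa_eq, h0] at hpa0
    rcases Nat.exists_eq_add_of_le hk with ⟨k', rfl⟩
    simp [pow_succ] at hpa0
  have hwa0 : wa ≠ 0 := fun h0 => by rw [hpa_eq, h0, mul_zero] at hpa0; exact hpa0 rfl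
  -- va is real rooted, hence splits
  have hRva : RealRooted va := by
    intro z hz
    refine hyp.2 a z ?_
    have : Polynomial.aeval z pa = (Polynomial.aeval z va) ^ k * Polynomial.aeval z wa := by
      rw [hpa_eq, map_mul, map_pow]
    rw [← hpa_def] at *
    rw [this, hz, zero_pow (by omega), zero_mul]
  have hsva : va.Splits := realRooted_splits hva0 hRva
  -- interlacing and root counts
  have hI : InterlacesU (lineRestrict h e a) pa := hint a
  have hcount := fun α => count_roots_interlaces hI hpa0 hha α
  have hroots_pa : pa.roots = k • va.roots + wa.roots := by
    rw [hpa_eq, Polynomial.roots_mul (by rw [← hpa_eq]; exact hpa0), Polynomial.roots_pow]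
  refine pow_dvd_of_counts hva0 hsva (k - 1) fun α => ?_
  have hc := hcount α
  rw [hroots_pa] at hc
  rw [Multiset.count_add, Multiset.count_nsmul] at hc
  rcases Nat.eq_zero_or_pos (va.roots.count α) with hμ | hμ
  · simp [hμ]
  · obtain ⟨k', rfl⟩ : ∃ k', k = k' + 1 := ⟨k - 1, by omega⟩
    have hexp : (k' + 1) * va.roots.count α = k' * va.roots.count α + va.roots.count α := by ring
    rw [hexp] at hc
    have hss : (k' + 1 - 1) * va.roots.count α = k' * va.roots.count α := by
      simp
    rw [hss]
    set t := k' * va.roots.count α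
    omega

end MainAux


/-- Lemma 2.3(c): if `h` interlaces `f₁^k·f₂`, then `f₁^(k-1)` divides `h`. -/
theorem pow_dvd_of_interlaces {n d₁ d₂ k : ℕ} (f₁ f₂ h : MvPolynomial (Fin n) ℝ)
    (e : Fin n → ℝ) (hf₁ : f₁.IsHomogeneous d₁) (hf₂ : f₂.IsHomogeneous d₂)
    (hk : 1 ≤ k) (hyp : IsHyperbolic (f₁ ^ k * f₂) e)
    (hh : h.IsHomogeneous (k * d₁ + d₂ - 1))
    (hint : Interlaces h (f₁ ^ k * f₂) e) :
    f₁ ^ (k - 1) ∣ h := by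
  classical
  set c := MvPolynomial.eval e f₁ with hc_def
  have hevalF : MvPolynomial.eval e (f₁ ^ k * f₂) ≠ 0 := hyp.1
  have hc : c ≠ 0 := by
    intro h0
    apply hevalF
    rw [map_mul, map_pow, ← hc_def, h0, zero_pow (by omega), zero_mul]
  set U := lineLift e f₁ with hU_def
  have hUtop : U.coeff d₁ = MvPolynomial.C c := by
    rw [hU_def, lineLift, coeff_line_top _ hf₁ _ _, aeval_C_comp]
  have hUdeg_le : U.natDegree ≤ d₁ := natDegree_line_le _ hf₁ _ _
  have hUtop0 : U.coeff d₁ ≠ 0 := by rw [hUtop]; exact MvPolynomial.C_ne_zero.mpr hc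
  have hU0 : U ≠ 0 := fun h0 => hUtop0 (by rw [h0, Polynomial.coeff_zero])
  have hUdeg : U.natDegree = d₁ :=
    le_antisymm hUdeg_le (Polynomial.le_natDegree_of_ne_zero hUtop0)
  have hUlead : U.leadingCoeff = MvPolynomial.C c := by
    rw [Polynomial.leadingCoeff, hUdeg, hUtop]
  set U' := Polynomial.C (MvPolynomial.C c⁻¹) * U with hU'_def
  have hC0 : (Polynomial.C (MvPolynomial.C c⁻¹) : Polynomial (MvPolynomial (Fin n) ℝ)) ≠ 0 := by
    simp [hc]
  have hU'monic : U'.Monic := by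
    rw [Polynomial.Monic, hU'_def, Polynomial.leadingCoeff_mul, hUlead,
      Polynomial.leadingCoeff_C, ← map_mul, inv_mul_cancel₀ hc, map_one]
  have hU'deg : U'.natDegree = d₁ := by
    rw [hU'_def, Polynomial.natDegree_mul hC0 hU0, Polynomial.natDegree_C, zero_add, hUdeg]
  set V := U' ^ (k - 1) with hV_def
  have hVmonic : V.Monic := hU'monic.pow _
  have hVdeg : V.natDegree = (k - 1) * d₁ := by
    rw [hV_def, Polynomial.natDegree_pow, hU'deg]
  set r := (lineLift e h) %ₘ V with hr_def
  have hkey : V * ((lineLift e h) /ₘ V) + r = lineLift e h := by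
    rw [hr_def, add_comm]; exact Polynomial.modByMonic_add_div _ _
  have hrdeg : r.degree < V.degree := by
    rw [hr_def]; exact Polynomial.degree_modByMonic_lt _ hVmonic
  -- r maps to zero along every line
  have hrzero : ∀ a : Fin n → ℝ, r.map (MvPolynomial.eval a) = 0 := by
    intro a
    set va := lineRestrict f₁ e a with hva_def
    have hvatop : va.coeff d₁ = c := by
      rw [hva_def, lineRestrict, coeff_line_top _ hf₁ _ _, aeval_eq_eval', hc_def]
    have hva0 : va ≠ 0 := fun h0 => hc (by rw [← hvatop, h0, Polynomial.coeff_zero])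
    have hvadeg : va.natDegree = d₁ :=
      le_antisymm (natDegree_line_le _ hf₁ _ _)
        (Polynomial.le_natDegree_of_ne_zero (by rw [hvatop]; exact hc))
    have hdvd_line : va ^ (k - 1) ∣ lineRestrict h e a :=
      line_pow_dvd f₁ f₂ h e hf₁ hf₂ hk hyp hint a
    have hmapU' : U'.map (MvPolynomial.eval a) = Polynomial.C c⁻¹ * va := by
      rw [hU'_def, Polynomial.map_mul, Polynomial.map_C, MvPolynomial.eval_C, hU_def,
        map_lineLift]
    have hmapV : V.map (MvPolynomial.eval a) = (Polynomial.C c⁻¹ * va) ^ (k - 1) := by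
      rw [hV_def, Polynomial.map_pow, hmapU']
    have hdvdV : va ^ (k - 1) ∣ V.map (MvPolynomial.eval a) := by
      rw [hmapV, mul_pow]; exact ⟨Polynomial.C c⁻¹ ^ (k - 1), by ring⟩
    have hdvd_r : va ^ (k - 1) ∣ r.map (MvPolynomial.eval a) := by
      have hr_eq : r = lineLift e h - V * ((lineLift e h) /ₘ V) := eq_sub_of_add_eq' hkey
      have heq : r.map (MvPolynomial.eval a) =
          (lineLift e h).map (MvPolynomial.eval a)
            - (V.map (MvPolynomial.eval a)) * (((lineLift e h) /ₘ V).map (MvPolynomial.eval a)) := by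
        rw [hr_eq, Polynomial.map_sub, Polynomial.map_mul]
      rw [heq, map_lineLift]
      exact dvd_sub hdvd_line (hdvdV.mul_right _)
    have hdegpow : (va ^ (k - 1)).degree = (((k - 1) * d₁ : ℕ) : WithBot ℕ) := by
      rw [Polynomial.degree_pow, Polynomial.degree_eq_natDegree hva0, hvadeg]
      simp [Nat.cast_mul, mul_comm]
    have hVdegree : V.degree = (((k - 1) * d₁ : ℕ) : WithBot ℕ) := by
      rw [Polynomial.degree_eq_natDegree hVmonic.ne_zero, hVdeg]
    have hlt : (r.map (MvPolynomial.eval a)).degree < (va ^ (k - 1)).degree := by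
      calc (r.map (MvPolynomial.eval a)).degree ≤ r.degree := Polynomial.degree_map_le
        _ < V.degree := hrdeg
        _ = (va ^ (k - 1)).degree := by rw [hVdegree, hdegpow]
    exact Polynomial.eq_zero_of_dvd_of_degree_lt hdvd_r hlt
  have hr0 : r = 0 := by
    refine Polynomial.ext fun i => ?_
    rw [Polynomial.coeff_zero]
    refine MvPolynomial.funext fun x => ?_
    have := congrArg (fun p => Polynomial.coeff p i) (hrzero x)
    simpa [Polynomial.coeff_map] using this
  have hVdvd : V ∣ lineLift e h := by
    refine ⟨(lineLift e h) /ₘ V, ?_⟩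
    conv_lhs => rw [← hkey, hr0, add_zero]
  have hUeq : U = Polynomial.C (MvPolynomial.C c) * U' := by
    rw [hU'_def, ← mul_assoc, ← map_mul, ← map_mul, mul_inv_cancel₀ hc, map_one, map_one, one_mul]
  have hUdvd : U ^ (k - 1) ∣ lineLift e h := by
    rw [hUeq, mul_pow, ← hV_def, mul_comm]
    refine (IsUnit.mul_right_dvd ?_).mpr hVdvd
    exact (Polynomial.isUnit_C.mpr (hc.isUnit.map (MvPolynomial.C : ℝ →+* MvPolynomial (Fin n) ℝ))).pow _
  have h2 := map_dvd (Polynomial.evalRingHom (0 : MvPolynomial (Fin n) ℝ)) hUdvd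
  rw [map_pow] at h2
  have e1 : Polynomial.evalRingHom (0 : MvPolynomial (Fin n) ℝ) U = f₁ := eval_zero_lineLift e f₁
  have e2 : Polynomial.evalRingHom (0 : MvPolynomial (Fin n) ℝ) (lineLift e h) = h :=
    eval_zero_lineLift e h
  rwa [e1, e2] at h2
end

section
/- Let f ∈ ℝ[x₁,…,xₙ] be homogeneous of degree d, hyperbolic with respect to e ∈ ℝⁿ, with f(e) > 0. For any g and h in Int(f,e), the product g·h is nonnegative at every point of V_ℝ(f) = {x ∈ ℝⁿ : f(x) = 0}. -/
open Filter Topology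

lemma eval_lineRestrict {n : ℕ} (f : MvPolynomial (Fin n) ℝ) (e a : Fin n → ℝ) (t : ℝ) :
    (lineRestrict f e a).eval t = MvPolynomial.eval (fun i => a i + e i * t) f := by
  rw [lineRestrict]
  induction f using MvPolynomial.induction_on with
  | C c => simp
  | add p q hp hq => simp [hp, hq]
  | mul_X p i hp => simp [hp]

lemma coeff_prod_natDeg {ι : Type*} (s : Finset ι) (fs : ι → Polynomial ℝ) (dg : ι → ℕ)
    (hb : ∀ i ∈ s, (fs i).natDegree ≤ dg i) :
    (∏ i ∈ s, fs i).coeff (∑ i ∈ s, dg i) = ∏ i ∈ s, (fs i).coeff (dg i) := by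
  induction s using Finset.cons_induction with
  | empty => simp
  | cons a s ha ih =>
    rw [Finset.prod_cons, Finset.sum_cons, Finset.prod_cons,
      Polynomial.coeff_mul_add_eq_of_natDegree_le (hb a (Finset.mem_cons_self a s))
        (le_trans (Polynomial.natDegree_prod_le s fs)
          (Finset.sum_le_sum fun i hi => hb i (Finset.mem_cons_of_mem hi))),
      ih (fun i hi => hb i (Finset.mem_cons_of_mem hi))]

lemma natDeg_lin (a e : ℝ) : (Polynomial.C a + Polynomial.C e * Polynomial.X).natDegree ≤ 1 := by
  refine le_trans (Polynomial.natDegree_add_le _ _) ?_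
  simp only [Polynomial.natDegree_C, Nat.zero_max]
  exact le_trans (Polynomial.natDegree_mul_le) (by simp)

lemma natDegree_monomial_image_le {n : ℕ} (e a : Fin n → ℝ) (m : Fin n →₀ ℕ) (c : ℝ) :
    (MvPolynomial.aeval (fun i => Polynomial.C (a i) + Polynomial.C (e i) * Polynomial.X)
      (MvPolynomial.monomial m c)).natDegree ≤ m.degree := by
  rw [MvPolynomial.aeval_monomial, Finsupp.prod]
  refine le_trans (Polynomial.natDegree_mul_le) ?_
  have h1 : ((algebraMap ℝ (Polynomial ℝ)) c).natDegree = 0 := Polynomial.natDegree_C _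
  rw [h1, zero_add, Finsupp.degree]
  refine le_trans (Polynomial.natDegree_prod_le _ _) (Finset.sum_le_sum fun i _ => ?_)
  refine le_trans (Polynomial.natDegree_pow_le) ?_
  have := natDeg_lin (a i) (e i)
  calc m i * (Polynomial.C (a i) + Polynomial.C (e i) * Polynomial.X).natDegree
      ≤ m i * 1 := Nat.mul_le_mul_left _ this
    _ = m i := Nat.mul_one _

lemma natDegree_lineRestrict_le {n d : ℕ} {f : MvPolynomial (Fin n) ℝ} (e a : Fin n → ℝ)
    (hf : f.IsHomogeneous d) : (lineRestrict f e a).natDegree ≤ d := by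
  rw [lineRestrict]
  conv_lhs => rw [f.as_sum]
  rw [map_sum]
  refine Polynomial.natDegree_sum_le_of_forall_le _ _ fun m hm => ?_
  refine le_trans (natDegree_monomial_image_le e a m _) ?_
  rw [MvPolynomial.IsHomogeneous, MvPolynomial.IsWeightedHomogeneous] at hf
  rw [Finsupp.degree_eq_weight_one]
  exact le_of_eq (hf (MvPolynomial.mem_support_iff.mp hm))

lemma coeff_lineRestrict {n d : ℕ} {f : MvPolynomial (Fin n) ℝ} (e a : Fin n → ℝ)
    (hf : f.IsHomogeneous d) :
    (lineRestrict f e a).coeff d = MvPolynomial.eval e f := by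
  rw [lineRestrict]
  conv_lhs => rw [f.as_sum]
  rw [map_sum, Polynomial.finset_sum_coeff, MvPolynomial.eval_eq]
  refine Finset.sum_congr rfl fun m hm => ?_
  have hdeg : ∑ i ∈ m.support, m i = d := by
    rw [MvPolynomial.IsHomogeneous, MvPolynomial.IsWeightedHomogeneous] at hf
    have := hf (MvPolynomial.mem_support_iff.mp hm)
    rw [← Finsupp.degree_apply, Finsupp.degree_eq_weight_one]
    exact this
  rw [MvPolynomial.aeval_monomial, Finsupp.prod]
  have halg : (algebraMap ℝ (Polynomial ℝ)) (MvPolynomial.coeff m f) =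
      Polynomial.C (MvPolynomial.coeff m f) := rfl
  rw [halg, Polynomial.coeff_C_mul, ← hdeg,
    coeff_prod_natDeg m.support _ (fun i => m i) (fun i _ => le_trans
      (Polynomial.natDegree_pow_le) (by
        calc m i * (Polynomial.C (a i) + Polynomial.C (e i) * Polynomial.X).natDegree
            ≤ m i * 1 := Nat.mul_le_mul_left _ (natDeg_lin (a i) (e i))
          _ = m i := Nat.mul_one _))]
  congr 1
  refine Finset.prod_congr rfl fun i _ => ?_
  have h1 : ((Polynomial.C (a i) + Polynomial.C (e i) * Polynomial.X) ^ m i).coeff (m i * 1)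
      = (Polynomial.C (a i) + Polynomial.C (e i) * Polynomial.X).coeff 1 ^ m i :=
    Polynomial.coeff_pow_of_natDegree_le (natDeg_lin (a i) (e i))
  rw [Nat.mul_one] at h1
  rw [h1]
  congr 1
  simp

lemma realRooted_card_roots : ∀ (N : ℕ) (p : Polynomial ℝ), p.natDegree ≤ N → RealRooted p →
    Multiset.card p.roots = p.natDegree := by
  intro N
  induction N with
  | zero =>
    intro p hp _
    rw [Nat.le_zero.mp hp]
    exact Nat.le_zero.mp (le_trans (Polynomial.card_roots' p) hp)
  | succ N ih =>
    intro p hp hR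
    by_cases h0 : p.natDegree = 0
    · exact le_antisymm (h0 ▸ Polynomial.card_roots' p) (h0 ▸ Nat.zero_le _)
    · have hpne : p ≠ 0 := fun hc => h0 (hc ▸ Polynomial.natDegree_zero)
      have hmap : (p.map (algebraMap ℝ ℂ)).natDegree = p.natDegree :=
        Polynomial.natDegree_map_eq_of_injective (algebraMap ℝ ℂ).injective p
      have hmapne : p.map (algebraMap ℝ ℂ) ≠ 0 := fun hc => hpne
        ((Polynomial.map_eq_zero_iff (algebraMap ℝ ℂ).injective).mp hc)
      obtain ⟨z, hz⟩ := Complex.exists_root (f := p.map (algebraMap ℝ ℂ)) (by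
        rw [Polynomial.degree_eq_natDegree hmapne, hmap]
        exact_mod_cast Nat.pos_of_ne_zero h0)
      have hzim : z.im = 0 := hR z (by
        rwa [Polynomial.aeval_def, Polynomial.eval₂_eq_eval_map])
      set t := z.re with ht
      have hzt : (t : ℂ) = z := Complex.ext rfl hzim.symm
      have hroot : p.IsRoot t := by
        have : Polynomial.eval ((algebraMap ℝ ℂ) t) (p.map (algebraMap ℝ ℂ))
            = (algebraMap ℝ ℂ) (p.eval t) := by
          rw [Polynomial.eval_map, Polynomial.eval₂_at_apply]
        have h2 : ((p.eval t : ℝ) : ℂ) = 0 := by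
          rw [← Complex.coe_algebraMap, ← this, Complex.coe_algebraMap, hzt]
          exact hz
        exact_mod_cast h2
      set q := p /ₘ (Polynomial.X - Polynomial.C t) with hq
      have hfac : (Polynomial.X - Polynomial.C t) * q = p :=
        Polynomial.mul_divByMonic_eq_iff_isRoot.mpr hroot
      have hqne : q ≠ 0 := fun hc => hpne (by rw [← hfac, hc, mul_zero])
      have hxne : (Polynomial.X - Polynomial.C t) ≠ 0 := Polynomial.X_sub_C_ne_zero t
      have hdq : p.natDegree = 1 + q.natDegree := by
        rw [← hfac, Polynomial.natDegree_mul hxne hqne, Polynomial.natDegree_X_sub_C]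
      have hqR : RealRooted q := by
        intro w hw
        refine hR w ?_
        rw [← hfac, map_mul, hw, mul_zero]
      have hcard : p.roots = t ::ₘ q.roots := by
        rw [← hfac, Polynomial.roots_mul (hfac ▸ hpne), Polynomial.roots_X_sub_C,
          Multiset.singleton_add]
      rw [hcard, Multiset.card_cons, hdq, ih q (by omega) hqR]
      omega

lemma list_prod_getD (l : List ℝ) :
    l.prod = ∏ i ∈ Finset.range l.length, l.getD i 0 := by
  conv_lhs => rw [← List.ofFn_get l]
  rw [List.prod_ofFn, ← Fin.prod_univ_eq_prod_range (fun i => l.getD i 0) l.length]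
  refine Finset.prod_congr rfl fun i _ => ?_
  rw [List.getD_eq_getElem l 0 i.isLt, List.get_eq_getElem]

lemma sorted_getD_mono {l : List ℝ} (h : l.Pairwise (· ≤ ·)) {i j : ℕ} (hij : i ≤ j)
    (hj : j < l.length) : l.getD i 0 ≤ l.getD j 0 := by
  have hi : i < l.length := lt_of_le_of_lt hij hj
  have := h.rel_get_of_le (a := ⟨i, hi⟩) (b := ⟨j, hj⟩) (Fin.mk_le_mk.mpr hij)
  rw [List.getD_eq_getElem _ _ hi, List.getD_eq_getElem _ _ hj]
  simpa [List.get_eq_getElem] using this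


lemma sortedRoots_sorted (p : Polynomial ℝ) : (sortedRoots p).Pairwise (· ≤ ·) := by
  rw [sortedRoots]; exact Multiset.pairwise_sort _ _

lemma length_sortedRoots (p : Polynomial ℝ) :
    (sortedRoots p).length = Multiset.card p.roots := by
  rw [sortedRoots]; exact Multiset.length_sort _

lemma eval_zero_eq_prod {m : ℕ} (u : Polynomial ℝ) (hu : RealRooted u) (hud : u.natDegree = m) :
    u.eval 0 = u.leadingCoeff * ∏ i ∈ Finset.range m, -((sortedRoots u).getD i 0) := by
  have hcard : Multiset.card u.roots = m := by
    rw [realRooted_card_roots u.natDegree u le_rfl hu, hud]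
  have hsplit : Polynomial.Splits u :=
    Polynomial.splits_iff_card_roots.mpr (by rw [hcard, ← hud])
  have hlen : (sortedRoots u).length = m := by rw [length_sortedRoots]; exact hcard
  conv_lhs => rw [← Polynomial.C_leadingCoeff_mul_prod_multiset_X_sub_C (hcard.trans hud.symm)]
  rw [Polynomial.eval_mul, Polynomial.eval_C, Polynomial.eval_multiset_prod]
  congr 1
  have hru : u.roots = ↑(sortedRoots u) := by rw [sortedRoots, Multiset.sort_eq]
  rw [Multiset.map_map, hru, Multiset.map_coe, Multiset.prod_coe, list_prod_getD,
    List.length_map, hlen]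
  refine Finset.prod_congr rfl fun i hi => ?_
  have hi' : i < (sortedRoots u).length := by rw [hlen]; exact Finset.mem_range.mp hi
  rw [List.getD_eq_getElem _ _ (by simpa using hi'), List.getD_eq_getElem _ _ hi',
    List.getElem_map]
  simp

/-- Lemma 2.4: the product of two interlacers is nonnegative on the real variety of `f`. -/
theorem mul_interlacers_nonneg {n d : ℕ} (f g h : MvPolynomial (Fin n) ℝ) (e : Fin n → ℝ)
    (hf : f.IsHomogeneous d) (hyp : IsHyperbolic f e) (hfe : 0 < MvPolynomial.eval e f)
    (hg : g ∈ IntCone f e d) (hh : h ∈ IntCone f e d) :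
    ∀ x : Fin n → ℝ, MvPolynomial.eval x f = 0 →
      0 ≤ MvPolynomial.eval x g * MvPolynomial.eval x h := by
  intro x hx
  obtain ⟨hgH, hgI, hge⟩ := hg
  obtain ⟨hhH, hhI, hhe⟩ := hh
  obtain ⟨hpR, hqR, hdq, hq_int⟩ := hgI x
  obtain ⟨-, hrR, hdr, hr_int⟩ := hhI x
  set p := lineRestrict f e x with hpdef
  set q := lineRestrict g e x with hqdef
  set r := lineRestrict h e x with hrdef
  have hfe' : MvPolynomial.eval e f ≠ 0 := ne_of_gt hfe
  have hcp : p.coeff d = MvPolynomial.eval e f := coeff_lineRestrict e x hf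
  have hpd : p.natDegree = d :=
    le_antisymm (natDegree_lineRestrict_le e x hf)
      (Polynomial.le_natDegree_of_ne_zero (by rw [hcp]; exact hfe'))
  have hpne : p ≠ 0 := fun hc => hfe' (by rw [← hcp, hc, Polynomial.coeff_zero])
  have hd1 : 1 ≤ d := by omega
  have hqd : q.natDegree = d - 1 := by omega
  have hrd : r.natDegree = d - 1 := by omega
  have hlcq : q.leadingCoeff = MvPolynomial.eval e g := by
    rw [Polynomial.leadingCoeff, hqd, coeff_lineRestrict e x hgH]
  have hlcr : r.leadingCoeff = MvPolynomial.eval e h := by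
    rw [Polynomial.leadingCoeff, hrd, coeff_lineRestrict e x hhH]
  have hlenp : (sortedRoots p).length = d := by
    rw [length_sortedRoots, realRooted_card_roots p.natDegree p le_rfl hpR]; exact hpd
  have hp0 : p.eval 0 = 0 := by rw [hpdef, eval_lineRestrict]; simpa using hx
  have h0mem : (0 : ℝ) ∈ sortedRoots p := by
    rw [sortedRoots, Multiset.mem_sort]
    exact Polynomial.mem_roots'.mpr ⟨hpne, hp0⟩
  obtain ⟨jf, hjv⟩ := List.mem_iff_get.mp h0mem
  have hj0 : (sortedRoots p).getD jf.1 0 = 0 := by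
    rw [List.getD_eq_getElem _ _ jf.isLt]
    simpa [List.get_eq_getElem] using hjv
  have hq0 : q.eval 0 = MvPolynomial.eval x g := by
    rw [hqdef, eval_lineRestrict]; simp
  have hr0 : r.eval 0 = MvPolynomial.eval x h := by
    rw [hrdef, eval_lineRestrict]; simp
  have hAB : (∏ i ∈ Finset.range (d - 1), -((sortedRoots q).getD i 0)) *
      (∏ i ∈ Finset.range (d - 1), -((sortedRoots r).getD i 0)) =
      ∏ i ∈ Finset.range (d - 1), ((sortedRoots q).getD i 0 * (sortedRoots r).getD i 0) := by
    rw [← Finset.prod_mul_distrib]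
    exact Finset.prod_congr rfl fun i _ => neg_mul_neg _ _
  have hfinal : MvPolynomial.eval x g * MvPolynomial.eval x h =
      (q.leadingCoeff * r.leadingCoeff) *
        ∏ i ∈ Finset.range (d - 1),
          ((sortedRoots q).getD i 0 * (sortedRoots r).getD i 0) := by
    rw [← hq0, ← hr0, eval_zero_eq_prod q hqR hqd, eval_zero_eq_prod r hrR hrd, ← hAB]
    ring
  rw [hfinal]
  refine mul_nonneg ?_ (Finset.prod_nonneg fun i hi => ?_)
  · rw [hlcq, hlcr]; exact mul_nonneg (le_of_lt hge) (le_of_lt hhe)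
  · have hi' : i < d - 1 := Finset.mem_range.mp hi
    have hiP : i + 1 < (sortedRoots p).length := by omega
    obtain ⟨hq1, hq2⟩ := hq_int i hiP
    obtain ⟨hr1, hr2⟩ := hr_int i hiP
    have hjlt : jf.1 < (sortedRoots p).length := jf.isLt
    have hsorted := sortedRoots_sorted p
    rcases le_or_gt (i + 1) jf.1 with hij | hij
    · have hPj := sorted_getD_mono hsorted hij hjlt
      rw [hj0] at hPj
      have h1 : (sortedRoots q).getD i 0 ≤ 0 := le_trans hq2 hPj
      have h2 : (sortedRoots r).getD i 0 ≤ 0 := le_trans hr2 hPj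
      exact mul_nonneg_iff.mpr (Or.inr ⟨h1, h2⟩)
    · have hji : jf.1 ≤ i := by omega
      have hiltP : i < (sortedRoots p).length := by omega
      have hPj := sorted_getD_mono hsorted hji hiltP
      rw [hj0] at hPj
      have h1 : 0 ≤ (sortedRoots q).getD i 0 := le_trans hPj hq1
      have h2 : 0 ≤ (sortedRoots r).getD i 0 := le_trans hPj hr1
      exact mul_nonneg h1 h2
end
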